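/- Let (μₙ)_{n∈ℕ} be a sequence of probability measures on a measurable space Ω and let A, B, C be measurable sets. Suppose that for every k ∈ ℕ there exists N such that for all n ≥ N, μₙ(A ∩ B) ≥ (1 − 1/n^k)·μₙ(A), and likewise for every k there exists N such that for all n ≥ N, μₙ(A ∩ C) ≥ (1 − 1/n^k)·μₙ(A). Then for every k ∈ ℕ there exists N such that for all n ≥ N, μₙ(A ∩ B ∩ C) ≥ (1 − 1/n^k)·μₙ(A ∩ B). (This is the soundness of the KLM cautious-monotonicity rule CM under the super-polynomial ε-semantics.) -/

import Mathlib

open MeasureTheory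
open scoped ENNReal

/-- Soundness of the KLM cautious-monotonicity rule CM under the
super-polynomial ε-semantics. -/
theorem KLM_CM_superpoly {Ω : Type*} [MeasurableSpace Ω]
    (μ : ℕ → Measure Ω) (hμ : ∀ n, IsProbabilityMeasure (μ n))
    (A B C : Set Ω)
    (hA : MeasurableSet A) (hB : MeasurableSet B) (hC : MeasurableSet C)
    (h₁ : ∀ k : ℕ, ∃ N : ℕ, ∀ n ≥ N,
      ENNReal.ofReal (1 - 1 / (n : ℝ) ^ k) * μ n A ≤ μ n (A ∩ B))
    (h₂ : ∀ k : ℕ, ∃ N : ℕ, ∀ n ≥ N,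
      ENNReal.ofReal (1 - 1 / (n : ℝ) ^ k) * μ n A ≤ μ n (A ∩ C)) :
    ∀ k : ℕ, ∃ N : ℕ, ∀ n ≥ N,
      ENNReal.ofReal (1 - 1 / (n : ℝ) ^ k) * μ n (A ∩ B) ≤
        μ n (A ∩ B ∩ C) := by
  intro k
  rcases Nat.eq_zero_or_pos k with hk0 | hk
  · refine ⟨0, fun n _ => ?_⟩
    subst hk0; simp
  obtain ⟨N₁, hN₁⟩ := h₁ 1
  obtain ⟨N₂, hN₂⟩ := h₂ (k + 1)
  refine ⟨max N₁ (max N₂ 2), fun n hn => ?_⟩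
  haveI := hμ n
  have hn1 := hN₁ n (le_trans (le_max_left _ _) hn)
  have hn2 := hN₂ n (le_trans ((le_max_left _ _).trans (le_max_right _ _)) hn)
  have hn2' : (2 : ℕ) ≤ n := le_trans ((le_max_right _ _).trans (le_max_right _ _)) hn
  have hnR : (2 : ℝ) ≤ (n : ℝ) := by exact_mod_cast hn2'
  have hnpos : (0 : ℝ) < n := by linarith
  have hpk : (0 : ℝ) < (n : ℝ) ^ k := pow_pos hnpos k
  have hpk1 : (0 : ℝ) < (n : ℝ) ^ (k + 1) := pow_pos hnpos _
  set ε : ℝ := 1 / (n : ℝ) ^ (k + 1) with hεdef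
  set δ : ℝ := 1 / (n : ℝ) ^ k with hδdef
  have hεnn : 0 ≤ ε := by positivity
  have hδnn : 0 ≤ δ := by positivity
  have hε1 : ε ≤ 1 := by
    rw [hεdef, div_le_one hpk1]
    exact one_le_pow₀ (by linarith)
  have hδ1 : δ ≤ 1 := by
    rw [hδdef, div_le_one hpk]
    exact one_le_pow₀ (by linarith)
  have h2ε : 2 * ε ≤ δ := by
    rw [hεdef, hδdef, pow_succ, mul_one_div, div_le_div_iff₀ (by positivity) hpk]
    nlinarith [hpk]
  -- Step A: μ A ≤ μ (A ∩ C) + ε μ A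
  have hstepA : μ n A ≤ μ n (A ∩ C) + ENNReal.ofReal ε * μ n A := by
    have hsplit : ENNReal.ofReal (1 - ε) + ENNReal.ofReal ε = 1 := by
      rw [← ENNReal.ofReal_add (by linarith) hεnn]
      norm_num
    calc μ n A = (ENNReal.ofReal (1 - ε) + ENNReal.ofReal ε) * μ n A := by
          rw [hsplit, one_mul]
      _ = ENNReal.ofReal (1 - ε) * μ n A + ENNReal.ofReal ε * μ n A := by rw [add_mul]
      _ ≤ μ n (A ∩ C) + ENNReal.ofReal ε * μ n A := add_le_add_left hn2 _
  -- Step B: μ ((A∩B) \ C) ≤ ε μ A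
  have hdiff : μ n ((A ∩ B) \ C) ≤ ENNReal.ofReal ε * μ n A := by
    have hmono : μ n ((A ∩ B) \ C) ≤ μ n (A \ C) :=
      measure_mono (fun x hx => ⟨hx.1.1, hx.2⟩)
    have hAC := measure_inter_add_diff (μ := μ n) A hC
    have h' : μ n (A ∩ C) + μ n (A \ C) ≤ μ n (A ∩ C) + ENNReal.ofReal ε * μ n A := by
      rw [hAC]; exact hstepA
    exact hmono.trans ((ENNReal.add_le_add_iff_left (measure_ne_top _ _)).mp h')
  -- Step C: μ A ≤ 2 μ (A ∩ B)
  have hA2 : μ n A ≤ 2 * μ n (A ∩ B) := by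
    have hhalf : (2 : ℝ≥0∞)⁻¹ * μ n A ≤ μ n (A ∩ B) := by
      refine le_trans (mul_le_mul_left ?_ _) hn1
      have h2inv : ((2 : ℝ≥0∞))⁻¹ = ENNReal.ofReal (1 / 2) := by
        rw [ENNReal.ofReal_div_of_pos (by norm_num)]
        norm_num
      rw [h2inv]
      apply ENNReal.ofReal_le_ofReal
      rw [pow_one]
      have : (1 : ℝ) / n ≤ 1 / 2 := one_div_le_one_div_of_le (by norm_num) hnR
      linarith
    calc μ n A = 2 * (2⁻¹ * μ n A) := by
          rw [← mul_assoc, ENNReal.mul_inv_cancel (by norm_num) (by norm_num), one_mul]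
      _ ≤ 2 * μ n (A ∩ B) := mul_le_mul_right hhalf _
  -- Step D: μ ((A∩B) \ C) ≤ δ μ (A ∩ B)
  have hkey : μ n ((A ∩ B) \ C) ≤ ENNReal.ofReal δ * μ n (A ∩ B) := by
    calc μ n ((A ∩ B) \ C) ≤ ENNReal.ofReal ε * μ n A := hdiff
      _ ≤ ENNReal.ofReal ε * (2 * μ n (A ∩ B)) := mul_le_mul_right hA2 _
      _ = ENNReal.ofReal (2 * ε) * μ n (A ∩ B) := by
          rw [ENNReal.ofReal_mul (by norm_num : (0:ℝ) ≤ 2), ← mul_assoc]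
          norm_num
          ring_nf
      _ ≤ ENNReal.ofReal δ * μ n (A ∩ B) :=
          mul_le_mul_left (ENNReal.ofReal_le_ofReal h2ε) _
  -- Conclusion
  have hABC := measure_inter_add_diff (μ := μ n) (A ∩ B) hC
  have hsum : ENNReal.ofReal (1 - δ) * μ n (A ∩ B) + ENNReal.ofReal δ * μ n (A ∩ B)
      = μ n (A ∩ B) := by
    rw [← add_mul, ← ENNReal.ofReal_add (by linarith) hδnn]
    norm_num
  have hfinB : ENNReal.ofReal δ * μ n (A ∩ B) ≠ ⊤ :=
    ENNReal.mul_ne_top ENNReal.ofReal_ne_top (measure_ne_top _ _)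
  have hfinal : ENNReal.ofReal (1 - δ) * μ n (A ∩ B) + ENNReal.ofReal δ * μ n (A ∩ B)
      ≤ μ n (A ∩ B ∩ C) + ENNReal.ofReal δ * μ n (A ∩ B) := by
    rw [hsum]
    calc μ n (A ∩ B) = μ n (A ∩ B ∩ C) + μ n ((A ∩ B) \ C) := hABC.symm
      _ ≤ _ := add_le_add_right hkey _
  exact (ENNReal.add_le_add_iff_right hfinB).mp hfinal
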